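/- arXiv:2202.04828 — 5 statements merged into one kernel-verified Lean document; each statement's English description precedes it below -/
import Mathlib

section
/- Let n ≥ 1. Let h : ℝⁿ → ℝⁿ be three times continuously differentiable with Jacobian Dh(ẑ) invertible at every point ẑ, and for k = 1,…,n let η_k : ℝ × ℝⁿ → ℝ be three times continuously differentiable. Define F : ℝⁿ × ℝⁿ → ℝ by F(ẑ, w) = Σ_{k=1}^n η_k((h(ẑ))_k, w) + log |det Dh(ẑ)|. Assume ∂²F/∂ẑ_i ∂ẑ_j (ẑ, w) = 0 for all i ≠ j and all (ẑ, w) ∈ ℝⁿ × ℝⁿ. Assume moreover that for every z ∈ ℝⁿ the 2n vector-valued functions of w ∈ ℝⁿ, namely v_k(z_k, ·) : ℝⁿ → ℝⁿ with l-th component ∂²η_k/∂z∂w_l (z_k, w) and v̊_k(z_k, ·) : ℝⁿ → ℝⁿ with l-th component ∂³η_k/∂z²∂w_l (z_k, w), for k = 1,…,n, are linearly independent. Then for every ẑ ∈ ℝⁿ, every k, and all i ≠ j, (Dh(ẑ))_{ki} · (Dh(ẑ))_{kj} = 0; that is, each row of Dh(ẑ) has exactly one nonzero entry. -/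
open scoped BigOperators

/-- Partial derivative of `f : ℝⁿ → ℝ` in the `l`-th coordinate direction at `x`. -/
noncomputable def pd {n : ℕ} (f : (Fin n → ℝ) → ℝ) (l : Fin n) (x : Fin n → ℝ) : ℝ :=
  fderiv ℝ f x (Pi.single l 1)

/-- Analytic core of Theorem 1 (identifiability under a fixed temporal causal model). -/
theorem stmt0 (n : ℕ) (hn : 1 ≤ n)
    (h : (Fin n → ℝ) → (Fin n → ℝ)) (hsmooth : ContDiff ℝ 3 h)
    -- the Jacobian matrix of `h`
    (J : (Fin n → ℝ) → Matrix (Fin n) (Fin n) ℝ)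
    (hJ : ∀ zh k i, J zh k i = fderiv ℝ h zh (Pi.single i 1) k)
    (hJinv : ∀ zh, IsUnit (J zh))
    -- the component log conditional densities η_k(z, w)
    (η : Fin n → ℝ → (Fin n → ℝ) → ℝ)
    (hη : ∀ k, ContDiff ℝ 3 (fun p : ℝ × (Fin n → ℝ) => η k p.1 p.2))
    -- F(ẑ, w) = Σ_k η_k((h ẑ)_k, w) + log |det Dh(ẑ)|
    (F : (Fin n → ℝ) → (Fin n → ℝ) → ℝ)
    (hF : ∀ zh w, F zh w = (∑ k, η k (h zh k) w) + Real.log |(J zh).det|)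
    -- vanishing of the cross second-order partials of F in ẑ
    (hcross : ∀ (i j : Fin n), i ≠ j → ∀ (zh w : Fin n → ℝ),
      pd (fun y => pd (fun x => F x w) i y) j zh = 0)
    -- v_k(z, w)_l = ∂²η_k/∂z∂w_l (z, w)
    (v : Fin n → ℝ → (Fin n → ℝ) → (Fin n → ℝ))
    (hv : ∀ k z w l, v k z w l = pd (fun w' => deriv (fun z' => η k z' w') z) l w)
    -- v̊_k(z, w)_l = ∂³η_k/∂z²∂w_l (z, w)
    (vr : Fin n → ℝ → (Fin n → ℝ) → (Fin n → ℝ))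
    (hvr : ∀ k z w l, vr k z w l = pd (fun w' => deriv (deriv (fun z' => η k z' w')) z) l w)
    -- for each value of z, the 2n vector functions v_k(z_k, ·), v̊_k(z_k, ·) of w
    -- are linearly independent
    (hli : ∀ z : Fin n → ℝ, LinearIndependent ℝ
      (fun kb : Fin n × Bool => fun w : Fin n → ℝ =>
        if kb.2 then v kb.1 (z kb.1) w else vr kb.1 (z kb.1) w)) :
    ∀ (zh : Fin n → ℝ) (k i j : Fin n), i ≠ j → J zh k i * J zh k j = 0 := by
  classical
  intro zh k₀ i j hij
  set d1 : Fin n → ℝ → (Fin n → ℝ) → ℝ :=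
    fun k z w => deriv (fun z' => η k z' w) z with hd1def
  set d2 : Fin n → ℝ → (Fin n → ℝ) → ℝ :=
    fun k z w => deriv (deriv (fun z' => η k z' w)) z with hd2def
  have hdiff3 : Differentiable ℝ h := hsmooth.differentiable (by norm_num)
  -- regularity of d1, d2
  have hd1c : ∀ kk, ContDiff ℝ 2 (fun p : ℝ × (Fin n → ℝ) => d1 kk p.1 p.2) := by
    intro kk
    have := ContDiff.fderiv_apply (f := fun (p : ℝ × (Fin n → ℝ)) (z : ℝ) => η kk z p.2)
      (g := fun p => p.1) (k := fun _ => (1:ℝ)) (n := 2)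
      ((hη kk).comp (contDiff_snd.prodMk (contDiff_snd.comp contDiff_fst)))
      contDiff_fst contDiff_const (by norm_num)
    exact this
  have hd2c : ∀ kk, ContDiff ℝ 1 (fun p : ℝ × (Fin n → ℝ) => d2 kk p.1 p.2) := by
    intro kk
    have := ContDiff.fderiv_apply (f := fun (p : ℝ × (Fin n → ℝ)) (z : ℝ) => d1 kk z p.2)
      (g := fun p => p.1) (k := fun _ => (1:ℝ)) (n := 1)
      ((hd1c kk).comp (contDiff_snd.prodMk (contDiff_snd.comp contDiff_fst)))
      contDiff_fst contDiff_const (by norm_num)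
    exact this
  have hd1z : ∀ kk w, ContDiff ℝ 2 (fun z : ℝ => d1 kk z w) := fun kk w =>
    (hd1c kk).comp (contDiff_id.prodMk contDiff_const)
  have hd1w : ∀ kk zz, ContDiff ℝ 2 (fun w => d1 kk zz w) := fun kk zz =>
    (hd1c kk).comp (contDiff_const.prodMk contDiff_id)
  have hd2w : ∀ kk zz, ContDiff ℝ 1 (fun w => d2 kk zz w) := fun kk zz =>
    (hd2c kk).comp (contDiff_const.prodMk contDiff_id)
  -- regularity of entries of J
  have hJc : ∀ kk ii, ContDiff ℝ 2 (fun y => J y kk ii) := by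
    intro kk ii
    have h1 := ContDiff.fderiv_apply (f := fun (_ : Fin n → ℝ) => h) (g := id)
      (k := fun _ => (Pi.single ii 1 : Fin n → ℝ)) (n := 2)
      (hsmooth.comp contDiff_snd) contDiff_id contDiff_const (by norm_num)
    have h2 : ContDiff ℝ 2 (fun y => fderiv ℝ h y (Pi.single ii 1) kk) :=
      contDiff_pi.mp h1 kk
    have heq : (fun y => J y kk ii) = fun y => fderiv ℝ h y (Pi.single ii 1) kk :=
      funext fun y => hJ y kk ii
    rw [heq]; exact h2
  have hJd : ∀ kk ii, Differentiable ℝ (fun y => J y kk ii) :=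
    fun kk ii => (hJc kk ii).differentiable (by norm_num)
  -- log |det J|
  have hdetc : ContDiff ℝ 2 (fun y => (J y).det) := by
    have heq : (fun y => (J y).det)
        = fun y => ∑ σ : Equiv.Perm (Fin n),
            ((Equiv.Perm.sign σ : ℤ) : ℝ) * ∏ ii, J y (σ ii) ii := by
      funext y; rw [Matrix.det_apply']
    rw [heq]
    exact ContDiff.sum fun σ _ => contDiff_const.mul (contDiff_prod fun ii _ => hJc (σ ii) ii)
  have hdetne : ∀ y, (J y).det ≠ 0 := fun y =>
    isUnit_iff_ne_zero.mp ((Matrix.isUnit_iff_isUnit_det (J y)).mp (hJinv y))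
  set L : (Fin n → ℝ) → ℝ := fun y => Real.log |(J y).det| with hLdef
  have hLeq : L = fun y => Real.log ((J y).det) := by
    funext y; rw [hLdef]; exact Real.log_abs _
  have hLc : ∀ y, ContDiffAt ℝ 2 L y := by
    intro y; rw [hLeq]
    exact (Real.contDiffAt_log.2 (hdetne y)).comp y hdetc.contDiffAt
  have hLd : Differentiable ℝ L := fun y => ((hLc y).differentiableAt (by norm_num))
  have hpdLd : DifferentiableAt ℝ (fun y => pd L i y) zh := by
    have h1 : ContDiffAt ℝ 1 (fun y => fderiv ℝ L y) zh := (hLc zh).fderiv_right (by norm_num)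
    have h2 : ContDiffAt ℝ 1 (fun y => fderiv ℝ L y (Pi.single i 1)) zh :=
      h1.clm_apply contDiffAt_const
    exact h2.differentiableAt (by norm_num)
  -- derivative of components of h
  have hhkd : ∀ (kk : Fin n) (y : Fin n → ℝ),
      HasFDerivAt (fun x => h x kk)
        ((ContinuousLinearMap.proj kk : ((Fin n → ℝ)) →L[ℝ] ℝ).comp (fderiv ℝ h y)) y :=
    fun kk y => ((ContinuousLinearMap.proj kk : ((Fin n → ℝ)) →L[ℝ] ℝ)).hasFDerivAt.comp y (hdiff3 y).hasFDerivAt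
  have hcompd : ∀ (kk : Fin n) (w y : Fin n → ℝ), HasFDerivAt (fun x => η kk (h x kk) w)
      ((d1 kk (h y kk) w) •
        ((ContinuousLinearMap.proj kk : ((Fin n → ℝ)) →L[ℝ] ℝ).comp (fderiv ℝ h y))) y := by
    intro kk w y
    have hder : HasDerivAt (fun z => η kk z w) (d1 kk (h y kk) w) (h y kk) :=
      ((((hη kk).comp (contDiff_id.prodMk contDiff_const)).differentiable
        (by norm_num)) (h y kk)).hasDerivAt
    exact hder.comp_hasFDerivAt y (hhkd kk y)
  -- Step 1: first partial of F in direction i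
  have step1 : ∀ (w y : Fin n → ℝ),
      pd (fun x => F x w) i y = (∑ kk, d1 kk (h y kk) w * J y kk i) + pd L i y := by
    intro w y
    have hFfun : (fun x => F x w) = fun x => (∑ kk, η kk (h x kk) w) + L x := by
      funext x; rw [hF x w]
    have Hsum : HasFDerivAt (fun x => ∑ kk, η kk (h x kk) w)
        (∑ kk, (d1 kk (h y kk) w) •
          ((ContinuousLinearMap.proj kk : ((Fin n → ℝ)) →L[ℝ] ℝ).comp (fderiv ℝ h y))) y :=
      HasFDerivAt.fun_sum (fun kk _ => hcompd kk w y)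
    have Htot := Hsum.fun_add (hLd y).hasFDerivAt
    rw [hFfun]
    simp only [pd]
    rw [Htot.fderiv]
    simp only [ContinuousLinearMap.add_apply, ContinuousLinearMap.coe_sum',
      Finset.sum_apply, ContinuousLinearMap.coe_smul', Pi.smul_apply,
      ContinuousLinearMap.coe_comp', Function.comp_apply,
      ContinuousLinearMap.proj_apply, smul_eq_mul]
    congr 1
    refine Finset.sum_congr rfl fun kk _ => ?_
    rw [hJ y kk i]
  set z : Fin n → ℝ := h zh with hzdef
  set c : Fin n → ℝ := fun kk => pd (fun y => J y kk i) j zh with hcdef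
  -- derivative of y ↦ d1 kk (h y kk) w
  have hd1hd : ∀ (kk : Fin n) (w y : Fin n → ℝ),
      HasFDerivAt (fun x => d1 kk (h x kk) w)
        ((d2 kk (h y kk) w) •
          ((ContinuousLinearMap.proj kk : ((Fin n → ℝ)) →L[ℝ] ℝ).comp (fderiv ℝ h y))) y := by
    intro kk w y
    have hder : HasDerivAt (fun zz => d1 kk zz w) (d2 kk (h y kk) w) (h y kk) :=
      ((hd1z kk w).differentiable (by norm_num) (h y kk)).hasDerivAt
    exact hder.comp_hasFDerivAt y (hhkd kk y)
  -- Step 2: second cross partial of the sum part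
  have step2 : ∀ w : Fin n → ℝ,
      pd (fun y => ∑ kk, d1 kk (h y kk) w * J y kk i) j zh
        = ∑ kk, (c kk * d1 kk (z kk) w + (J zh kk i * J zh kk j) * d2 kk (z kk) w) := by
    intro w
    have Hk : ∀ kk : Fin n, HasFDerivAt (fun y => d1 kk (h y kk) w * J y kk i)
        ((d1 kk (h zh kk) w) • (fderiv ℝ (fun y => J y kk i) zh)
          + (J zh kk i) • ((d2 kk (h zh kk) w) •
            ((ContinuousLinearMap.proj kk : ((Fin n → ℝ)) →L[ℝ] ℝ).comp (fderiv ℝ h zh)))) zh :=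
      fun kk => (hd1hd kk w zh).mul ((hJd kk i) zh).hasFDerivAt
    have Hs := HasFDerivAt.fun_sum (fun kk (_ : kk ∈ Finset.univ) => Hk kk)
    simp only [pd]
    rw [Hs.fderiv]
    simp only [ContinuousLinearMap.coe_sum', Finset.sum_apply,
      ContinuousLinearMap.add_apply, ContinuousLinearMap.coe_smul', Pi.smul_apply,
      ContinuousLinearMap.coe_comp', Function.comp_apply,
      ContinuousLinearMap.proj_apply, smul_eq_mul]
    refine Finset.sum_congr rfl fun kk _ => ?_
    rw [← hJ zh kk j]
    have hc : fderiv ℝ (fun y => J y kk i) zh (Pi.single j 1) = c kk := rfl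
    rw [hc, hzdef]
    ring
  -- Step 3: the cross partial identity with the L-term
  have step3 : ∀ w : Fin n → ℝ,
      (∑ kk, (c kk * d1 kk (z kk) w + (J zh kk i * J zh kk j) * d2 kk (z kk) w))
        + pd (fun y => pd L i y) j zh = 0 := by
    intro w
    have h0 := hcross i j hij zh w
    have hfun : (fun y => pd (fun x => F x w) i y)
        = fun y => (∑ kk, d1 kk (h y kk) w * J y kk i) + pd L i y := funext (step1 w)
    rw [hfun] at h0
    have hBd : DifferentiableAt ℝ (fun y => ∑ kk, d1 kk (h y kk) w * J y kk i) zh :=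
      (HasFDerivAt.fun_sum (fun kk (_ : kk ∈ Finset.univ) =>
        (hd1hd kk w zh).mul ((hJd kk i) zh).hasFDerivAt)).differentiableAt
    have hsplit : pd (fun y => (∑ kk, d1 kk (h y kk) w * J y kk i) + pd L i y) j zh
        = pd (fun y => ∑ kk, d1 kk (h y kk) w * J y kk i) j zh
          + pd (fun y => pd L i y) j zh := by
      show fderiv ℝ (fun y => (∑ kk, d1 kk (h y kk) w * J y kk i) + pd L i y) zh (Pi.single j 1)
        = pd (fun y => ∑ kk, d1 kk (h y kk) w * J y kk i) j zh + pd (fun y => pd L i y) j zh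
      rw [fderiv_fun_add hBd hpdLd, ContinuousLinearMap.add_apply]
      rfl
    rw [hsplit, step2 w] at h0
    exact h0
  -- Step 4: differentiate in w
  have step4 : ∀ (w : Fin n → ℝ) (l : Fin n),
      ∑ kk, (c kk * v kk (z kk) w l + (J zh kk i * J zh kk j) * vr kk (z kk) w l) = 0 := by
    intro w l
    have hconst : (fun w' => ∑ kk, (c kk * d1 kk (z kk) w'
          + (J zh kk i * J zh kk j) * d2 kk (z kk) w'))
        = fun _ => - pd (fun y => pd L i y) j zh := by
      funext w'
      have := step3 w'
      linarith
    have h0 : pd (fun w' => ∑ kk, (c kk * d1 kk (z kk) w'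
          + (J zh kk i * J zh kk j) * d2 kk (z kk) w')) l w = 0 := by
      rw [hconst]
      simp [pd]
    have Hk : ∀ kk : Fin n, HasFDerivAt (fun w' => c kk * d1 kk (z kk) w'
          + (J zh kk i * J zh kk j) * d2 kk (z kk) w')
        ((c kk) • fderiv ℝ (fun w' => d1 kk (z kk) w') w
          + (J zh kk i * J zh kk j) • fderiv ℝ (fun w' => d2 kk (z kk) w') w) w := by
      intro kk
      have h1 : HasFDerivAt (fun w' => d1 kk (z kk) w')
          (fderiv ℝ (fun w' => d1 kk (z kk) w') w) w :=
        (((hd1w kk (z kk)).differentiable (by norm_num)) w).hasFDerivAt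
      have h2 : HasFDerivAt (fun w' => d2 kk (z kk) w')
          (fderiv ℝ (fun w' => d2 kk (z kk) w') w) w :=
        (((hd2w kk (z kk)).differentiable (by norm_num)) w).hasFDerivAt
      exact (h1.const_mul (c kk)).add (h2.const_mul (J zh kk i * J zh kk j))
    have Hs := HasFDerivAt.fun_sum (fun kk (_ : kk ∈ Finset.univ) => Hk kk)
    have hval : pd (fun w' => ∑ kk, (c kk * d1 kk (z kk) w'
          + (J zh kk i * J zh kk j) * d2 kk (z kk) w')) l w
        = ∑ kk, (c kk * v kk (z kk) w l + (J zh kk i * J zh kk j) * vr kk (z kk) w l) := by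
      simp only [pd]
      rw [Hs.fderiv]
      simp only [ContinuousLinearMap.coe_sum', Finset.sum_apply,
        ContinuousLinearMap.add_apply, ContinuousLinearMap.coe_smul', Pi.smul_apply,
        smul_eq_mul]
      refine Finset.sum_congr rfl fun kk _ => ?_
      have hv1 : fderiv ℝ (fun w' => d1 kk (z kk) w') w (Pi.single l 1)
          = v kk (z kk) w l := (hv kk (z kk) w l).symm
      have hv2 : fderiv ℝ (fun w' => d2 kk (z kk) w') w (Pi.single l 1)
          = vr kk (z kk) w l := (hvr kk (z kk) w l).symm
      rw [hv1, hv2]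
    rw [← hval]
    exact h0
  -- Step 5: linear independence
  have hlin := Fintype.linearIndependent_iff.mp (hli z)
  set g : Fin n × Bool → ℝ :=
    fun kb => if kb.2 then c kb.1 else J zh kb.1 i * J zh kb.1 j with hgdef
  have hsum0 : ∑ kb : Fin n × Bool, g kb •
      (fun w : Fin n → ℝ => if kb.2 then v kb.1 (z kb.1) w else vr kb.1 (z kb.1) w) = 0 := by
    funext w
    have : (∑ kb : Fin n × Bool, g kb •
        (fun w : Fin n → ℝ => if kb.2 then v kb.1 (z kb.1) w else vr kb.1 (z kb.1) w)) w
        = ∑ kb : Fin n × Bool, g kb •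
          (if kb.2 then v kb.1 (z kb.1) w else vr kb.1 (z kb.1) w) := by
      simp [Finset.sum_apply]
    rw [this]
    funext l
    have happ : (∑ kb : Fin n × Bool, g kb •
        (if kb.2 then v kb.1 (z kb.1) w else vr kb.1 (z kb.1) w)) l
        = ∑ kb : Fin n × Bool, g kb *
          (if kb.2 then v kb.1 (z kb.1) w l else vr kb.1 (z kb.1) w l) := by
      rw [Finset.sum_apply]
      refine Finset.sum_congr rfl fun kb _ => ?_
      by_cases hb : kb.2 <;> simp [hb]
    rw [happ]
    rw [Fintype.sum_prod_type]
    have hrw : ∀ kk : Fin n, (∑ b : Bool, g (kk, b) *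
        (if b then v kk (z kk) w l else vr kk (z kk) w l))
        = c kk * v kk (z kk) w l + (J zh kk i * J zh kk j) * vr kk (z kk) w l := by
      intro kk
      rw [Fintype.sum_bool]
      simp [hgdef]
    calc (∑ kk : Fin n, ∑ b : Bool, g (kk, b) *
          (if b then v kk (z kk) w l else vr kk (z kk) w l))
        = ∑ kk : Fin n, (c kk * v kk (z kk) w l
            + (J zh kk i * J zh kk j) * vr kk (z kk) w l) :=
          Finset.sum_congr rfl fun kk _ => hrw kk
      _ = 0 := step4 w l
  have hzero := hlin g hsum0 (k₀, false)
  simpa [hgdef] using hzero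
end

section
/- Let n ≥ 1 and let (Ω, 𝒜, P) be a probability space with (Ω, 𝒜) a standard Borel space. Let E : Ω → ℝⁿ be a random vector whose coordinates E_1,…,E_n are mutually independent, with E_k Gaussian with mean 0 and variance σ_k² where σ_k > 0. Let Z : Ω → ℝⁿ be a measurable random vector independent of E, and let q : ℝⁿ → ℝⁿ be measurable. Let D_1 = diag(d_1,…,d_n) with all d_k ≠ 0, let U be an n×n real orthogonal matrix, and let D_2 = diag(σ_1⁻¹,…,σ_n⁻¹). Define the random vector Ẑ = D_1 U D_2 (q(Z) + E). Then the coordinates Ẑ_1,…,Ẑ_n are mutually conditionally independent given the σ-algebra generated by Z. -/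
open MeasureTheory ProbabilityTheory Matrix ENNReal Set Real

section Aux

lemma aux_lintegral_pi_prod : ∀ (n : ℕ) (μ : Fin n → Measure ℝ) [∀ i, SigmaFinite (μ i)]
    (f : Fin n → ℝ → ℝ≥0∞), (∀ i, Measurable (f i)) →
    ∫⁻ x, ∏ i, f i (x i) ∂Measure.pi μ = ∏ i, ∫⁻ y, f i y ∂μ i := by
  intro n
  induction n with
  | zero =>
    intro μ _ f hf
    simp [lintegral_one, Measure.pi_univ]
  | succ n ih =>
    intro μ _ f hf
    have hmp := measurePreserving_piFinSuccAbove μ 0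
    set e := MeasurableEquiv.piFinSuccAbove (fun _ : Fin (n+1) => ℝ) 0 with he
    have hg2 : Measurable fun y : Fin n → ℝ => ∏ j, f (Fin.succ j) (y j) :=
      Finset.measurable_prod _ fun j _ => (hf _).comp (measurable_pi_apply j)
    have hg : Measurable fun p : ℝ × (Fin n → ℝ) => f 0 p.1 * ∏ j, f (Fin.succ j) (p.2 j) :=
      ((hf 0).comp measurable_fst).mul (hg2.comp measurable_snd)
    have h1 : ∫⁻ x, ∏ i, f i (x i) ∂Measure.pi μ
        = ∫⁻ p, f 0 p.1 * ∏ j, f (Fin.succ j) (p.2 j)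
            ∂((μ 0).prod (Measure.pi fun j => μ ((0 : Fin (n+1)).succAbove j))) := by
      rw [← hmp.lintegral_comp hg]
      refine lintegral_congr fun x => ?_
      rw [Fin.prod_univ_succ]
      congr 1
    have h2 : ∫⁻ p, f 0 p.1 * ∏ j, f (Fin.succ j) (p.2 j)
            ∂((μ 0).prod (Measure.pi fun j => μ ((0 : Fin (n+1)).succAbove j)))
        = (∫⁻ y, f 0 y ∂μ 0) * ∫⁻ y, ∏ j, f (Fin.succ j) (y j)
            ∂(Measure.pi fun j => μ ((0 : Fin (n+1)).succAbove j)) :=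
      lintegral_prod_mul ((hf 0).aemeasurable) hg2.aemeasurable
    have h3 : ∫⁻ y, ∏ j, f (Fin.succ j) (y j)
            ∂(Measure.pi fun j => μ ((0 : Fin (n+1)).succAbove j))
        = ∏ j, ∫⁻ y, f (Fin.succ j) y ∂μ ((0 : Fin (n+1)).succAbove j) :=
      ih _ _ (fun j => hf _)
    rw [h1, h2, h3, Fin.prod_univ_succ]
    congr 1

lemma aux_pi_withDensity (n : ℕ) (μ : Fin n → Measure ℝ) [∀ i, SigmaFinite (μ i)]
    (f : Fin n → ℝ → ℝ≥0∞) (hf : ∀ i, Measurable (f i))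
    (h2 : ∀ i, SigmaFinite ((μ i).withDensity (f i))) :
    (Measure.pi μ).withDensity (fun x => ∏ i, f i (x i)) =
      Measure.pi (fun i => (μ i).withDensity (f i)) := by
  haveI := h2
  refine (Measure.pi_eq fun s hs => ?_).symm
  rw [withDensity_apply _ (MeasurableSet.univ_pi hs)]
  have : ∀ x : Fin n → ℝ, (univ.pi s).indicator (fun x => ∏ i, f i (x i)) x
      = ∏ i, (s i).indicator (f i) (x i) := by
    intro x
    by_cases hx : x ∈ univ.pi s
    · rw [indicator_of_mem hx]
      exact Finset.prod_congr rfl fun i _ => (indicator_of_mem (hx i (mem_univ i)) _).symm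
    · rw [indicator_of_notMem hx]
      simp only [Set.mem_pi, mem_univ, forall_true_left, not_forall] at hx
      obtain ⟨i, hi⟩ := hx
      refine (Finset.prod_eq_zero (Finset.mem_univ i) ?_).symm
      exact indicator_of_notMem hi _
  calc ∫⁻ x in univ.pi s, ∏ i, f i (x i) ∂Measure.pi μ
      = ∫⁻ x, (univ.pi s).indicator (fun x => ∏ i, f i (x i)) x ∂Measure.pi μ :=
        (lintegral_indicator (MeasurableSet.univ_pi hs) _).symm
    _ = ∫⁻ x, ∏ i, (s i).indicator (f i) (x i) ∂Measure.pi μ := lintegral_congr this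
    _ = ∏ i, ∫⁻ y, (s i).indicator (f i) y ∂μ i :=
        aux_lintegral_pi_prod n μ _ (fun i => (hf i).indicator (hs i))
    _ = ∏ i, ((μ i).withDensity (f i)) (s i) := by
        refine Finset.prod_congr rfl fun i _ => ?_
        rw [lintegral_indicator (hs i) _, withDensity_apply _ (hs i)]

lemma aux_withDensity_map_equiv {α β : Type*} [MeasurableSpace α] [MeasurableSpace β]
    (e : α ≃ᵐ β) (μ : Measure α) (f : α → ℝ≥0∞) (hf : Measurable f) :
    (μ.withDensity f).map e = (μ.map e).withDensity (f ∘ e.symm) := by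
  ext s hs
  rw [MeasurableEquiv.map_apply, withDensity_apply _ (e.measurable hs),
    withDensity_apply _ hs,
    setLIntegral_map hs (hf.comp e.symm.measurable) e.measurable]
  refine setLIntegral_congr_fun (e.measurable hs) (fun x _ => ?_)
  simp

lemma aux_measurable_mulVec {n : ℕ} (M : Matrix (Fin n) (Fin n) ℝ) :
    Measurable (M.mulVec : (Fin n → ℝ) → (Fin n → ℝ)) :=
  (continuous_const.matrix_mulVec continuous_id).measurable

noncomputable def mulVecEquiv {n : ℕ} (U : Matrix (Fin n) (Fin n) ℝ) (hU : Uᵀ * U = 1)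
    (hUU : U * Uᵀ = 1) : (Fin n → ℝ) ≃ᵐ (Fin n → ℝ) where
  toFun := U.mulVec
  invFun := Uᵀ.mulVec
  left_inv := fun x => by rw [Matrix.mulVec_mulVec, hU, Matrix.one_mulVec]
  right_inv := fun x => by rw [Matrix.mulVec_mulVec, hUU, Matrix.one_mulVec]
  measurable_toFun := aux_measurable_mulVec U
  measurable_invFun := aux_measurable_mulVec Uᵀ

lemma aux_gauss_rot {n : ℕ} (U : Matrix (Fin n) (Fin n) ℝ) (hU : Uᵀ * U = 1) :
    (Measure.pi fun _ : Fin n => gaussianReal 0 1).map U.mulVec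
      = Measure.pi fun _ : Fin n => gaussianReal 0 1 := by
  have hUU : U * Uᵀ = 1 := mul_eq_one_comm.mp hU
  have hdet2 : U.det * U.det = 1 := by
    have := congrArg Matrix.det hU
    rwa [Matrix.det_mul, Matrix.det_transpose, Matrix.det_one] at this
  have hdetne : U.det ≠ 0 := fun h => by simp [h] at hdet2
  have habs : |U.det| = 1 := by
    rcases mul_self_eq_one_iff.mp hdet2 with h | h <;> simp [h]
  set F : (Fin n → ℝ) → ℝ≥0∞ := fun x => ∏ i, gaussianPDF 0 1 (x i) with hF
  have hFmeas : Measurable F :=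
    Finset.measurable_prod _ fun i _ => (measurable_gaussianPDF 0 1).comp (measurable_pi_apply i)
  have hrep1 : (gaussianReal 0 1 : Measure ℝ) = volume.withDensity (gaussianPDF 0 1) :=
    gaussianReal_of_var_ne_zero 0 one_ne_zero
  have hsf : ∀ i : Fin n, SigmaFinite ((volume : Measure ℝ).withDensity (gaussianPDF 0 1)) := by
    intro i; rw [← hrep1]; infer_instance
  have hrep : (Measure.pi fun _ : Fin n => gaussianReal 0 1)
      = (volume : Measure (Fin n → ℝ)).withDensity F := by
    rw [MeasureTheory.volume_pi, hF,
      aux_pi_withDensity n (fun _ => volume) (fun _ => gaussianPDF 0 1)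
        (fun _ => measurable_gaussianPDF 0 1) hsf]
    exact congrArg Measure.pi (funext fun i => hrep1)
  set e := mulVecEquiv U hU hUU with he
  have hecoe : (e : (Fin n → ℝ) → (Fin n → ℝ)) = U.mulVec := rfl
  have hvol : (volume : Measure (Fin n → ℝ)).map e = volume := by
    rw [hecoe]
    have : (U.mulVec : (Fin n → ℝ) → (Fin n → ℝ)) = Matrix.toLin' U := by
      funext v; rw [Matrix.toLin'_apply]
    rw [this, Real.map_matrix_volume_pi_eq_smul_volume_pi hdetne, abs_inv, habs]
    simp
  have hFsymm : F ∘ e.symm = F := by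
    funext x
    have hsum : ∑ i, (Uᵀ.mulVec x i - 0) ^ 2 = ∑ i, (x i - 0) ^ 2 := by
      simp only [sub_zero]
      have h1 : ∑ i, Uᵀ.mulVec x i ^ 2 = (x ᵥ* U) ⬝ᵥ (x ᵥ* U) := by
        rw [Matrix.mulVec_transpose]
        simp [dotProduct, sq]
      have h2 : (x ᵥ* U) ⬝ᵥ (x ᵥ* U) = x ⬝ᵥ x := by
        have h3 : (x ᵥ* U) ⬝ᵥ (Uᵀ *ᵥ x) = ((x ᵥ* U) ᵥ* Uᵀ) ⬝ᵥ x := Matrix.dotProduct_mulVec _ _ _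
        rw [Matrix.mulVec_transpose] at h3
        rw [h3, Matrix.vecMul_vecMul, hUU, Matrix.vecMul_one]
      rw [h1, h2]
      simp [dotProduct, sq]
    show ∏ i, gaussianPDF 0 1 (Uᵀ.mulVec x i) = ∏ i, gaussianPDF 0 1 (x i)
    simp only [gaussianPDF_def]
    rw [← ENNReal.ofReal_prod_of_nonneg (fun i _ => gaussianPDFReal_nonneg _ _ _),
      ← ENNReal.ofReal_prod_of_nonneg (fun i _ => gaussianPDFReal_nonneg _ _ _)]
    congr 1
    simp only [gaussianPDFReal_def]
    rw [Finset.prod_mul_distrib, Finset.prod_mul_distrib, ← Real.exp_sum, ← Real.exp_sum]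
    congr 1
    rw [← Finset.sum_div, ← Finset.sum_div, Finset.sum_neg_distrib, Finset.sum_neg_distrib, hsum]
  calc (Measure.pi fun _ : Fin n => gaussianReal 0 1).map U.mulVec
      = ((volume : Measure (Fin n → ℝ)).withDensity F).map e := by rw [hrep, hecoe]
    _ = ((volume : Measure (Fin n → ℝ)).map e).withDensity (F ∘ e.symm) :=
        aux_withDensity_map_equiv e _ F hFmeas
    _ = (volume : Measure (Fin n → ℝ)).withDensity F := by rw [hvol, hFsymm]
    _ = Measure.pi fun _ : Fin n => gaussianReal 0 1 := hrep.symm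

lemma aux_pi_map_comp (n : ℕ) (m : Fin n → Measure ℝ) [∀ i, IsProbabilityMeasure (m i)]
    (g : Fin n → ℝ → ℝ) (hg : ∀ i, Measurable (g i)) :
    (Measure.pi m).map (fun y i => g i (y i)) = Measure.pi (fun i => (m i).map (g i)) := by
  haveI : ∀ i, IsProbabilityMeasure ((m i).map (g i)) :=
    fun i => Measure.isProbabilityMeasure_map (hg i).aemeasurable
  refine ((Measure.pi_eq fun s hs => ?_)).symm
  have hG : Measurable fun y : Fin n → ℝ => fun i => g i (y i) :=
    measurable_pi_lambda _ fun i => (hg i).comp (measurable_pi_apply i)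
  rw [Measure.map_apply hG (MeasurableSet.univ_pi hs)]
  have hpre : (fun y : Fin n → ℝ => fun i => g i (y i)) ⁻¹' (univ.pi s)
      = univ.pi fun i => g i ⁻¹' s i := by
    ext y; simp [Set.mem_pi]
  rw [hpre, Measure.pi_pi]
  exact Finset.prod_congr rfl fun i _ => (Measure.map_apply (hg i) (hs i)).symm

lemma aux_law_E {Ω : Type*} [MeasurableSpace Ω] (P : Measure Ω) [IsProbabilityMeasure P]
    (n : ℕ) (E : Ω → Fin n → ℝ) (hE : Measurable E)
    (hEindep : iIndepFun (fun k ω => E ω k) P)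
    (m : Fin n → Measure ℝ) [∀ i, IsProbabilityMeasure (m i)]
    (hmarg : ∀ k, P.map (fun ω => E ω k) = m k) :
    P.map E = Measure.pi m := by
  haveI : ∀ i, SigmaFinite (m i) := fun i => inferInstance
  refine (Measure.pi_eq (μ := m) fun s hs => ?_).symm
  rw [Measure.map_apply hE (MeasurableSet.univ_pi hs)]
  have hpre : E ⁻¹' (univ.pi s) = ⋂ i ∈ Finset.univ, (fun ω => E ω i) ⁻¹' s i := by
    ext ω; simp [Set.mem_pi]
  rw [hpre, hEindep.measure_inter_preimage_eq_mul Finset.univ (fun i _ => hs i)]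
  refine Finset.prod_congr rfl fun i _ => ?_
  rw [← hmarg i, Measure.map_apply (hE.eval) (hs i)]

end Aux

/-- Proposition 1 (unidentifiability under Gaussian noise): for the latent process
`Ẑ = D₁ U D₂ (q(Z) + E)` with `E` an independent-coordinate Gaussian noise vector independent of
`Z`, `D₁ = diag d` nonsingular diagonal, `U` orthogonal and `D₂ = diag (σ k)⁻¹`, the coordinates
of `Ẑ` are mutually conditionally independent given the σ-algebra generated by `Z`. -/
theorem stmt1 {Ω : Type*} [MeasurableSpace Ω] [StandardBorelSpace Ω]
    (P : Measure Ω) [IsProbabilityMeasure P]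
    (n : ℕ) (hn : 1 ≤ n)
    (E : Ω → (Fin n → ℝ)) (hE : Measurable E)
    (hEindep : iIndepFun
      (fun k ω => E ω k) P)
    (σ : Fin n → NNReal) (hσ : ∀ k, 0 < σ k)
    (hEgauss : ∀ k, P.map (fun ω => E ω k) = gaussianReal 0 ((σ k) ^ 2))
    (Z : Ω → (Fin n → ℝ)) (hZ : Measurable Z)
    (hZE : IndepFun Z E P)
    (q : (Fin n → ℝ) → (Fin n → ℝ)) (hq : Measurable q)
    (d : Fin n → ℝ) (hd : ∀ k, d k ≠ 0)
    (U : Matrix (Fin n) (Fin n) ℝ) (hU : Uᵀ * U = 1) :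
    iCondIndepFun (MeasurableSpace.comap Z inferInstance) hZ.comap_le
      (fun k ω => ((Matrix.diagonal d * U * Matrix.diagonal (fun k => ((σ k : ℝ))⁻¹)).mulVec
        (q (Z ω) + E ω)) k) P := by
  classical
  set A : Matrix (Fin n) (Fin n) ℝ :=
    Matrix.diagonal d * U * Matrix.diagonal (fun k => ((σ k : ℝ))⁻¹) with hA
  set Y : Ω → Fin n → ℝ := fun ω => A.mulVec (E ω) with hYdef
  set c : (Fin n → ℝ) → (Fin n → ℝ) := fun x => A.mulVec (q x) with hcdef
  have hAmeas := aux_measurable_mulVec A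
  have hYmeas : Measurable Y := hAmeas.comp hE
  have hcmeas : Measurable c := hAmeas.comp hq
  set ν : Fin n → Measure ℝ := fun i => (gaussianReal 0 1).map (fun t : ℝ => d i * t) with hνdef
  haveI hνprob : ∀ i, IsProbabilityMeasure (ν i) :=
    fun i => Measure.isProbabilityMeasure_map (measurable_const_mul (d i)).aemeasurable
  -- the law of Y
  have hmτ := aux_measurable_mulVec (Matrix.diagonal (fun k => ((σ k : ℝ))⁻¹))
  have hmU := aux_measurable_mulVec U
  have hmd := aux_measurable_mulVec (Matrix.diagonal d)
  have hlawY : P.map Y = Measure.pi ν := by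
    have hE1 : P.map E = Measure.pi (fun i => gaussianReal 0 ((σ i)^2)) :=
      aux_law_E P n E hE hEindep _ hEgauss
    have hDτ : ((Matrix.diagonal (fun k => ((σ k : ℝ))⁻¹)).mulVec : (Fin n → ℝ) → _)
        = fun y i => (σ i : ℝ)⁻¹ * y i := by
      funext y i; simp [Matrix.mulVec_diagonal]
    have hDd : ((Matrix.diagonal d).mulVec : (Fin n → ℝ) → _) = fun y i => d i * y i := by
      funext y i; simp [Matrix.mulVec_diagonal]
    have step0 : P.map Y = (((P.map E).map
        (Matrix.diagonal (fun k => ((σ k : ℝ))⁻¹)).mulVec).map U.mulVec).map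
        (Matrix.diagonal d).mulVec := by
      rw [Measure.map_map hmτ hE, Measure.map_map hmU (hmτ.comp hE),
        Measure.map_map hmd (hmU.comp (hmτ.comp hE))]
      congr 1
      funext ω
      show Y ω = (Matrix.diagonal d).mulVec (U.mulVec
        ((Matrix.diagonal (fun k => ((σ k : ℝ))⁻¹)).mulVec (E ω)))
      rw [Matrix.mulVec_mulVec, Matrix.mulVec_mulVec, hYdef, hA, Matrix.mul_assoc]
    have step1 : (P.map E).map (Matrix.diagonal (fun k => ((σ k : ℝ))⁻¹)).mulVec
        = Measure.pi (fun _ : Fin n => gaussianReal 0 1) := by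
      rw [hE1, hDτ, aux_pi_map_comp n _ (fun i t => (σ i : ℝ)⁻¹ * t)
        (fun i => measurable_const_mul _)]
      congr 1
      funext i
      have := gaussianReal_map_const_mul (μ := 0) (v := (σ i)^2) ((σ i : ℝ)⁻¹)
      rw [this, mul_zero]
      congr 1
      have hσne : (σ i : ℝ) ≠ 0 := by exact_mod_cast (hσ i).ne'
      apply NNReal.coe_injective
      push_cast
      field_simp
    have step2 : ((P.map E).map (Matrix.diagonal (fun k => ((σ k : ℝ))⁻¹)).mulVec).map U.mulVec
        = Measure.pi (fun _ : Fin n => gaussianReal 0 1) := by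
      rw [step1, aux_gauss_rot U hU]
    have step3 : (((P.map E).map
        (Matrix.diagonal (fun k => ((σ k : ℝ))⁻¹)).mulVec).map U.mulVec).map
        (Matrix.diagonal d).mulVec = Measure.pi ν := by
      rw [step2, hDd, aux_pi_map_comp n _ (fun i t => d i * t)
        (fun i => measurable_const_mul _)]
    rw [step0, step3]
  -- independence of Z and Y, and the conditional distribution
  have hZY : IndepFun Z Y P := hZE.comp measurable_id hAmeas
  have hcomp : P.map (fun ω => (Z ω, Y ω))
      = (P.map Z) ⊗ₘ Kernel.const _ (P.map Y) := by
    rw [Measure.compProd_const]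
    exact (indepFun_iff_map_prod_eq_prod_map_map hZ.aemeasurable hYmeas.aemeasurable).mp hZY
  have hcd := condDistrib_ae_eq_of_measure_eq_compProd Z hYmeas.aemeasurable
    (κ := Kernel.const _ (P.map Y)) hcomp
  have hcd' : ∀ᵐ ω ∂P, Kernel.const _ (P.map Y) (Z ω) = condDistrib Y Z P (Z ω) :=
    (ae_of_ae_map hZ.aemeasurable hcd).mono fun _ h => h.symm
  -- key conditional expectation formula
  have H : ∀ T : Set ((Fin n → ℝ) × (Fin n → ℝ)), MeasurableSet T →
      (P⟦(fun ω => (Z ω, Y ω)) ⁻¹' T | MeasurableSpace.comap Z inferInstance⟧)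
        =ᵐ[P] fun ω => (Measure.pi ν {y | (Z ω, y) ∈ T}).toReal := by
    intro T hT
    have hsm : StronglyMeasurable (T.indicator (fun _ => (1:ℝ))) :=
      stronglyMeasurable_const.indicator hT
    have hpre : (fun ω => T.indicator (fun _ => (1:ℝ)) (Z ω, Y ω))
        = ((fun ω => (Z ω, Y ω)) ⁻¹' T).indicator (fun _ => (1:ℝ)) := by
      funext ω
      by_cases h : (Z ω, Y ω) ∈ T
      · rw [Set.indicator_of_mem h]
        exact (Set.indicator_of_mem (show ω ∈ (fun ω => (Z ω, Y ω)) ⁻¹' T from h) (fun _ => (1:ℝ))).symm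
      · rw [Set.indicator_of_notMem h]
        exact (Set.indicator_of_notMem
          (show ω ∉ (fun ω => (Z ω, Y ω)) ⁻¹' T from h) (fun _ => (1:ℝ))).symm
    have hTset : MeasurableSet ((fun ω => (Z ω, Y ω)) ⁻¹' T) := (hZ.prodMk hYmeas) hT
    have hint : Integrable (fun ω => T.indicator (fun _ => (1:ℝ)) (Z ω, Y ω)) P := by
      rw [hpre]; exact (integrable_const (1:ℝ)).indicator hTset
    have h0 := condExp_prod_ae_eq_integral_condDistrib (μ := P) hZ hYmeas.aemeasurable hsm hint
    rw [hpre] at h0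
    refine h0.trans ?_
    filter_upwards [hcd'] with ω hω
    have hslicemeas : MeasurableSet {y : Fin n → ℝ | (Z ω, y) ∈ T} :=
      measurable_prodMk_left hT
    have hind2 : (fun y => T.indicator (fun _ => (1:ℝ)) (Z ω, y))
        = ({y : Fin n → ℝ | (Z ω, y) ∈ T}).indicator (fun _ => (1:ℝ)) := by
      funext y
      by_cases h : (Z ω, y) ∈ T
      · rw [Set.indicator_of_mem h]
        exact (Set.indicator_of_mem (show y ∈ {y : Fin n → ℝ | (Z ω, y) ∈ T} from h) (fun _ => (1:ℝ))).symm
      · rw [Set.indicator_of_notMem h]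
        exact (Set.indicator_of_notMem
          (show y ∉ {y : Fin n → ℝ | (Z ω, y) ∈ T} from h) (fun _ => (1:ℝ))).symm
    rw [← hω, Kernel.const_apply, hlawY, hind2]
    exact integral_indicator_one hslicemeas
  -- computing the slice measure as a product
  have hslice : ∀ (x : Fin n → ℝ) (s : Finset (Fin n)) (B : Fin n → Set ℝ),
      (∀ i, MeasurableSet (B i)) →
      Measure.pi ν {y | ∀ i ∈ s, c x i + y i ∈ B i}
        = ∏ i ∈ s, ν i ((fun t => c x i + t) ⁻¹' B i) := by
    intro x s B hB
    have hset : {y : Fin n → ℝ | ∀ i ∈ s, c x i + y i ∈ B i}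
        = univ.pi (fun i => if i ∈ s then (fun t => c x i + t) ⁻¹' B i else univ) := by
      ext y
      simp only [Set.mem_setOf_eq, Set.mem_pi, mem_univ, forall_true_left]
      constructor
      · intro h i
        by_cases hi : i ∈ s
        · simpa [hi] using h i hi
        · simp [hi]
      · intro h i hi
        have := h i
        simpa [hi] using this
    rw [hset, Measure.pi_pi]
    have hcongr : ∀ i, ν i (if i ∈ s then (fun t => c x i + t) ⁻¹' B i else univ)
        = if i ∈ s then ν i ((fun t => c x i + t) ⁻¹' B i) else 1 := by
      intro i; by_cases hi : i ∈ s <;> simp [hi]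
    rw [Finset.prod_congr rfl (fun i _ => hcongr i), Finset.prod_ite_mem Finset.univ s,
      Finset.univ_inter]
  -- main argument
  have hfmeas : ∀ k, Measurable (fun ω => (A.mulVec (q (Z ω) + E ω)) k) :=
    fun k => (measurable_pi_apply k).comp (hAmeas.comp ((hq.comp hZ).add hE))
  rw [iCondIndepFun_iff _ _ _ _ hfmeas]
  intro s g hg
  have hB' : ∀ i, ∃ B : Set ℝ, MeasurableSet B ∧
      (i ∈ s → (fun ω => (A.mulVec (q (Z ω) + E ω)) i) ⁻¹' B = g i) := by
    intro i
    by_cases hi : i ∈ s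
    · obtain ⟨B, hBmeas, hBeq⟩ := hg i hi
      exact ⟨B, hBmeas, fun _ => hBeq⟩
    · exact ⟨univ, MeasurableSet.univ, fun h => absurd h hi⟩
  choose B hBmeas hBeq using hB'
  have hfeq : ∀ i ω, (A.mulVec (q (Z ω) + E ω)) i = c (Z ω) i + Y ω i := by
    intro i ω
    rw [Matrix.mulVec_add]
    rfl
  have hgi : ∀ i ∈ s, g i = (fun ω => (Z ω, Y ω)) ⁻¹'
      {p : (Fin n → ℝ) × (Fin n → ℝ) | c p.1 i + p.2 i ∈ B i} := by
    intro i hi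
    rw [← hBeq i hi]
    ext ω
    simp [Set.mem_preimage, hfeq i ω]
  have hTmeas : ∀ i, MeasurableSet {p : (Fin n → ℝ) × (Fin n → ℝ) | c p.1 i + p.2 i ∈ B i} := by
    intro i
    have : Measurable fun p : (Fin n → ℝ) × (Fin n → ℝ) => c p.1 i + p.2 i :=
      ((measurable_pi_apply i).comp (hcmeas.comp measurable_fst)).add
        ((measurable_pi_apply i).comp measurable_snd)
    exact this (hBmeas i)
  set T : Set ((Fin n → ℝ) × (Fin n → ℝ)) := {p | ∀ i ∈ s, c p.1 i + p.2 i ∈ B i} with hTdef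
  have hT : MeasurableSet T := by
    have : T = ⋂ i ∈ s, {p : (Fin n → ℝ) × (Fin n → ℝ) | c p.1 i + p.2 i ∈ B i} := by
      ext p; simp [hTdef]
    rw [this]
    exact MeasurableSet.biInter (s : Set (Fin n)).to_countable (fun i _ => hTmeas i)
  have hinter : (⋂ i ∈ s, g i) = (fun ω => (Z ω, Y ω)) ⁻¹' T := by
    ext ω
    simp only [Set.mem_iInter, Set.mem_preimage, hTdef, Set.mem_setOf_eq]
    constructor
    · intro h i hi
      have := h i hi
      rw [hgi i hi] at this
      exact this
    · intro h i hi
      rw [hgi i hi]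
      exact h i hi
  have hRi : ∀ i ∈ s, (P⟦g i | MeasurableSpace.comap Z inferInstance⟧)
      =ᵐ[P] fun ω => (ν i ((fun t => c (Z ω) i + t) ⁻¹' B i)).toReal := by
    intro i hi
    have h1 := H {p : (Fin n → ℝ) × (Fin n → ℝ) | c p.1 i + p.2 i ∈ B i} (hTmeas i)
    rw [← hgi i hi] at h1
    refine h1.trans (Filter.Eventually.of_forall fun ω => ?_)
    have h2 := hslice (Z ω) {i} B hBmeas
    simp only [Finset.prod_singleton] at h2
    have h3 : {y : Fin n → ℝ | (Z ω, y) ∈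
        {p : (Fin n → ℝ) × (Fin n → ℝ) | c p.1 i + p.2 i ∈ B i}}
        = {y : Fin n → ℝ | ∀ j ∈ ({i} : Finset (Fin n)), c (Z ω) j + y j ∈ B j} := by
      ext y; simp
    dsimp only
    rw [h3, h2]
  rw [hinter]
  refine (H T hT).trans ?_
  have hcount : (∀ᵐ ω ∂P, ∀ i ∈ s, (P⟦g i | MeasurableSpace.comap Z inferInstance⟧) ω
      = (ν i ((fun t => c (Z ω) i + t) ⁻¹' B i)).toReal) :=
    (ae_ball_iff (s : Set (Fin n)).to_countable).mpr hRi
  filter_upwards [hcount] with ω h2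
  have hsl : {y : Fin n → ℝ | (Z ω, y) ∈ T}
      = {y : Fin n → ℝ | ∀ i ∈ s, c (Z ω) i + y i ∈ B i} := by
    ext y; simp [hTdef]
  rw [hsl, hslice (Z ω) s B hBmeas, ENNReal.toReal_prod, Finset.prod_apply]
  exact Finset.prod_congr rfl fun i hi => (h2 i hi).symm
end

section
/- Let n ≥ 1 and m ≥ 1. Let h : ℝⁿ → ℝⁿ be three times continuously differentiable with Jacobian Dh(ẑ) invertible at every point ẑ. For k = 1,…,n and contexts r = 1,…,m let η_k^{(r)} : ℝ → ℝ be three times continuously differentiable, define F_r(ẑ) = Σ_{k=1}^n η_k^{(r)}((h(ẑ))_k) + log|det Dh(ẑ)|, and assume ∂²F_r/∂ẑ_i∂ẑ_j(ẑ) = 0 for all r, all i ≠ j, and all ẑ ∈ ℝⁿ. If for every z ∈ ℝⁿ the 2n vectors in ℝ^{m−1} given by ((η_k^{(r)})''(z_k) − (η_k^{(r−1)})''(z_k))_{r=2,…,m} and ((η_k^{(r)})'(z_k) − (η_k^{(r−1)})'(z_k))_{r=2,…,m}, for k = 1,…,n, are linearly independent, then for every ẑ ∈ ℝⁿ each row of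 Dh(ẑ) has exactly one nonzero entry, i.e. (Dh(ẑ))_{ki}·(Dh(ẑ))_{kj} = 0 for all k and all i ≠ j. -/
open scoped BigOperators

/-- Analytic form of Theorem 3 (identifiability under observation changes),
with contexts indexed by `Fin m`. -/
theorem stmt7 (n m : ℕ) (hn : 1 ≤ n) (hm : 1 ≤ m)
    (h : (Fin n → ℝ) → (Fin n → ℝ)) (hsmooth : ContDiff ℝ 3 h)
    (J : (Fin n → ℝ) → Matrix (Fin n) (Fin n) ℝ)
    (hJ : ∀ zh k i, J zh k i = fderiv ℝ h zh (Pi.single i 1) k)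
    (hJinv : ∀ zh, IsUnit (J zh))
    -- η_k^{(r)}(z): log density of the k-th latent component in context r
    (η : Fin n → Fin m → ℝ → ℝ)
    (hη : ∀ k r, ContDiff ℝ 3 (η k r))
    -- F_r(ẑ) = Σ_k η_k^{(r)}((h ẑ)_k) + log |det Dh(ẑ)|
    (F : Fin m → (Fin n → ℝ) → ℝ)
    (hF : ∀ r zh, F r zh = (∑ k, η k r (h zh k)) + Real.log |(J zh).det|)
    -- vanishing of the cross second-order partials of each F_r in ẑ
    (hcross : ∀ (r : Fin m) (i j : Fin n), i ≠ j → ∀ zh : Fin n → ℝ,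
      pd (fun y => pd (fun x => F r x) i y) j zh = 0)
    -- for each z, the 2n vectors in ℝ^{m−1} of successive context-differences of the second
    -- and first derivatives of the η_k at z_k are linearly independent
    (hli : ∀ z : Fin n → ℝ, LinearIndependent ℝ
      (fun kb : Fin n × Bool => fun r : {r : Fin m // r.1 ≠ 0} =>
        if kb.2 then
          deriv (deriv (η kb.1 r.1)) (z kb.1) -
          deriv (deriv (η kb.1 ⟨r.1.1 - 1, lt_of_le_of_lt (Nat.sub_le _ _) r.1.2⟩)) (z kb.1)
        else
          deriv (η kb.1 r.1) (z kb.1) -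
          deriv (η kb.1 ⟨r.1.1 - 1, lt_of_le_of_lt (Nat.sub_le _ _) r.1.2⟩) (z kb.1))) :
    ∀ (zh : Fin n → ℝ) (k i j : Fin n), i ≠ j → J zh k i * J zh k j = 0 := by
  intro zh k0 i j hij
  classical
  -- basic differentiability facts
  have hd : Differentiable ℝ h := hsmooth.differentiable (by norm_num)
  have hη1 : ∀ k r, Differentiable ℝ (η k r) := fun k r => (hη k r).differentiable (by norm_num)
  have hηd2 : ∀ k r, ContDiff ℝ 2 (deriv (η k r)) := by
    intro k r
    have h3 : ContDiff ℝ ((2 : ℕ) + 1 : ℕ) (η k r) := by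
      have := hη k r; norm_num at this ⊢; exact_mod_cast this
    exact ((contDiff_succ_iff_deriv (n := 2)).mp h3).2.2
  have hη1' : ∀ k r t, HasDerivAt (η k r) (deriv (η k r) t) t :=
    fun k r t => ((hη1 k r) t).hasDerivAt
  have hη2' : ∀ k r t, HasDerivAt (deriv (η k r)) (deriv (deriv (η k r)) t) t :=
    fun k r t => (((hηd2 k r).differentiable two_ne_zero) t).hasDerivAt
  -- component derivatives of h
  have hhk : ∀ (k : Fin n) (x : Fin n → ℝ), HasFDerivAt (fun y => h y k)
      ((ContinuousLinearMap.proj k).comp (fderiv ℝ h x)) x := by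
    intro k x
    exact (ContinuousLinearMap.proj k).hasFDerivAt.comp x (hd x).hasFDerivAt
  -- smoothness of the Jacobian entries
  have hfd2 : ContDiff ℝ 2 (fderiv ℝ h) := hsmooth.fderiv_right (by norm_num)
  have hb2 : ∀ (k i : Fin n), ContDiff ℝ 2 (fun x => fderiv ℝ h x (Pi.single i 1) k) :=
    fun k i => contDiff_pi.mp (hfd2.clm_apply contDiff_const) k
  have hJfun : ∀ (k i : Fin n), (fun x => J x k i) = fun x => fderiv ℝ h x (Pi.single i 1) k := by
    intro k i; funext x; rw [hJ]
  have hJ2 : ∀ (k i : Fin n), ContDiff ℝ 2 (fun x => J x k i) := by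
    intro k i; rw [hJfun]; exact hb2 k i
  -- smoothness of the log-abs-det term
  have hdet2 : ContDiff ℝ 2 (fun x => (J x).det) := by
    simp only [Matrix.det_apply']
    exact ContDiff.sum fun σ _ => contDiff_const.mul (contDiff_prod fun l _ => hJ2 (σ l) l)
  have hdet0 : ∀ x, (J x).det ≠ 0 := fun x =>
    ((Matrix.isUnit_iff_isUnit_det _).mp (hJinv x)).ne_zero
  have hL2 : ContDiff ℝ 2 (fun x => Real.log |(J x).det|) := by
    have : (fun x => Real.log |(J x).det|) = fun x => Real.log ((J x).det) := by
      funext x; rw [Real.log_abs]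
    rw [this]
    exact contDiff_iff_contDiffAt.mpr fun x =>
      (Real.contDiffAt_log.mpr (hdet0 x)).comp (g := Real.log) x hdet2.contDiffAt
  -- first derivative of the sum part
  have hPhi' : ∀ (r : Fin m) (x : Fin n → ℝ), HasFDerivAt (fun y => ∑ k, η k r (h y k))
      (∑ k, deriv (η k r) (h x k) • ((ContinuousLinearMap.proj k).comp (fderiv ℝ h x))) x := by
    intro r x
    apply HasFDerivAt.fun_sum
    intro k _
    exact (hη1' k r (h x k)).comp_hasFDerivAt x (hhk k x)
  -- first cross partial of F r
  have pdF1 : ∀ (r : Fin m) (x : Fin n → ℝ), pd (fun x => F r x) i x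
      = (∑ k, deriv (η k r) (h x k) * J x k i) + pd (fun x => Real.log |(J x).det|) i x := by
    intro r x
    show fderiv ℝ (fun x => F r x) x (Pi.single i 1) = _
    have hFfun : (fun x => F r x)
        = fun x => (∑ k, η k r (h x k)) + Real.log |(J x).det| := by
      funext y; rw [hF]
    rw [hFfun, fderiv_fun_add (hPhi' r x).differentiableAt ((hL2.differentiable two_ne_zero) x),
      ContinuousLinearMap.add_apply]
    congr 1
    rw [(hPhi' r x).fderiv]
    simp [hJ]
  -- differentiability of the second summand of pdF1
  have hpdL : Differentiable ℝ (fun y => pd (fun x => Real.log |(J x).det|) i y) := by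
    unfold pd
    have h1 : ContDiff ℝ 1 (fderiv ℝ (fun x => Real.log |(J x).det|)) :=
      hL2.fderiv_right (by norm_num)
    exact (h1.clm_apply contDiff_const).differentiable one_ne_zero
  -- derivative of the first summand of pdF1
  have hG : ∀ r : Fin m, HasFDerivAt (fun y => ∑ k, deriv (η k r) (h y k) * J y k i)
      (∑ k, (deriv (η k r) (h zh k) • fderiv ℝ (fun y => J y k i) zh
        + J zh k i • (deriv (deriv (η k r)) (h zh k)
            • ((ContinuousLinearMap.proj k).comp (fderiv ℝ h zh))))) zh := by
    intro r
    apply HasFDerivAt.fun_sum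
    intro k _
    exact HasFDerivAt.mul (c := fun y => deriv (η k r) (h y k)) (d := fun y => J y k i) ((hη2' k r (h zh k)).comp_hasFDerivAt (h₂ := deriv (η k r)) zh (hhk k zh))
      ((((hJ2 k i).differentiable two_ne_zero) zh).hasFDerivAt)
  -- second cross partial of F r
  have pdF2 : ∀ r : Fin m, pd (fun y => pd (fun x => F r x) i y) j zh
      = (∑ k, (deriv (deriv (η k r)) (h zh k) * (J zh k i * J zh k j)
          + deriv (η k r) (h zh k) * pd (fun x => J x k i) j zh))
        + pd (fun y => pd (fun x => Real.log |(J x).det|) i y) j zh := by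
    intro r
    have hrw : (fun y => pd (fun x => F r x) i y)
        = fun y => (∑ k, deriv (η k r) (h y k) * J y k i)
            + pd (fun x => Real.log |(J x).det|) i y := by
      funext y; exact pdF1 r y
    show fderiv ℝ _ zh (Pi.single j 1) = _
    rw [hrw, fderiv_fun_add (hG r).differentiableAt (hpdL zh), ContinuousLinearMap.add_apply]
    congr 1
    rw [(hG r).fderiv]
    simp only [ContinuousLinearMap.sum_apply, ContinuousLinearMap.add_apply,
      ContinuousLinearMap.smul_apply, ContinuousLinearMap.coe_comp', Function.comp_apply,
      ContinuousLinearMap.proj_apply, smul_eq_mul]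
    apply Finset.sum_congr rfl
    intro k _
    rw [← hJ]
    unfold pd
    ring
  -- for every context r the sum part equals minus the (context-independent) log-det part
  have hS : ∀ r : Fin m, (∑ k, (deriv (deriv (η k r)) (h zh k) * (J zh k i * J zh k j)
          + deriv (η k r) (h zh k) * pd (fun x => J x k i) j zh))
        + pd (fun y => pd (fun x => Real.log |(J x).det|) i y) j zh = 0 := by
    intro r
    rw [← pdF2 r]
    exact hcross r i j hij zh
  -- apply the linear independence hypothesis at z = h zh
  have key := Fintype.linearIndependent_iff.mp (hli (h zh))
      (fun kb : Fin n × Bool => if kb.2 then J zh kb.1 i * J zh kb.1 j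
        else pd (fun x => J x kb.1 i) j zh)
      (by
        funext r
        have h3 : ∑ k, ((deriv (deriv (η k r.1)) (h zh k) * (J zh k i * J zh k j)
              + deriv (η k r.1) (h zh k) * pd (fun x => J x k i) j zh)
            - (deriv (deriv (η k ⟨r.1.1 - 1,
                  lt_of_le_of_lt (Nat.sub_le _ _) r.1.2⟩)) (h zh k) * (J zh k i * J zh k j)
              + deriv (η k ⟨r.1.1 - 1, lt_of_le_of_lt (Nat.sub_le _ _) r.1.2⟩) (h zh k)
                * pd (fun x => J x k i) j zh)) = 0 := by
          rw [Finset.sum_sub_distrib]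
          have ha := hS r.1
          have hb := hS ⟨r.1.1 - 1, lt_of_le_of_lt (Nat.sub_le _ _) r.1.2⟩
          linarith
        simp only [Finset.sum_apply, Pi.smul_apply, smul_eq_mul, Pi.zero_apply,
          Fintype.sum_prod_type, Fintype.sum_bool, if_true, if_false]
        rw [← h3]
        apply Finset.sum_congr rfl
        intro k _
        simp only [Bool.false_eq_true, if_false]
        ring)
      (k0, true)
  simpa using key
end

section
/- Let (Ω, 𝒜, P) be a probability space with (Ω, 𝒜) a standard Borel space, let 𝔪 ⊆ 𝒜 be a sub-σ-algebra, let n ≥ 2, and let X_1,…,X_n : Ω → ℝ be measurable random variables that are mutually conditionally independent given 𝔪. Then for any indices i ≠ j, the random variables X_i and X_j are conditionally independent given the σ-algebra generated by 𝔪 together with the random variables X_k for all k ∉ {i, j}. -/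
open MeasureTheory ProbabilityTheory

private lemma condexp_indicator_norm_le_one {Ω : Type*} {m : MeasurableSpace Ω}
    {mΩ : MeasurableSpace Ω} (hm : m ≤ mΩ) (P : Measure Ω) [IsProbabilityMeasure P]
    {s : Set Ω} (hs : MeasurableSet s) :
    ∀ᵐ ω ∂P, ‖(P⟦s|m⟧) ω‖ ≤ 1 := by
  have h0 : 0 ≤ᵐ[P] P⟦s|m⟧ :=
    condExp_nonneg (Filter.Eventually.of_forall fun ω =>
      Set.indicator_nonneg (fun _ _ => zero_le_one) ω)
  have h1 : P⟦s|m⟧ ≤ᵐ[P] P[(fun _ => (1:ℝ))|m] :=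
    condExp_mono ((integrable_const (1:ℝ)).indicator hs) (integrable_const 1)
      (Filter.Eventually.of_forall fun ω => by
        by_cases h : ω ∈ s <;> simp [h])
  have hc : P[(fun _ => (1:ℝ))|m] = fun _ => (1:ℝ) := condExp_const (μ := P) hm (1:ℝ)
  rw [hc] at h1
  filter_upwards [h0, h1] with ω h0 h1
  simp only [Pi.zero_apply] at h0
  rw [Real.norm_eq_abs, abs_le]
  exact ⟨by linarith, h1⟩

/-- First step in the proof of Theorem 1: mutual conditional independence of `X_1, …, X_n` given
a sub-σ-algebra `𝔪` implies that any two of them, `X_i` and `X_j` with `i ≠ j`, are conditionally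
independent given the σ-algebra generated by `𝔪` together with all the remaining `X_k`. -/
theorem stmt10 {Ω : Type*} [mΩ : MeasurableSpace Ω] [StandardBorelSpace Ω]
    (P : Measure Ω) [IsProbabilityMeasure P]
    (m' : MeasurableSpace Ω) (hm' : m' ≤ mΩ)
    (n : ℕ) (hn : 2 ≤ n)
    (X : Fin n → Ω → ℝ) (hX : ∀ k, Measurable[mΩ] (X k))
    (hindep : iCondIndepFun m' hm' (m := fun _ : Fin n => (inferInstance : MeasurableSpace ℝ)) X P)
    (i j : Fin n) (hij : i ≠ j) :
    CondIndepFun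
      (m' ⊔ ⨆ k ∈ ({i, j} : Set (Fin n))ᶜ, MeasurableSpace.comap (X k) inferInstance)
      (sup_le hm' (iSup₂_le fun k _ => (hX k).comap_le))
      (X i) (X j) P := by
  classical
  set K : Set (Fin n) := ({i, j} : Set (Fin n))ᶜ with hKdef
  set m₀ : MeasurableSpace Ω :=
    m' ⊔ ⨆ k ∈ K, MeasurableSpace.comap (X k) inferInstance with hm₀def
  have hm₀ : m₀ ≤ mΩ := sup_le hm' (iSup₂_le fun k _ => (hX k).comap_le)
  letI : MeasurableSpace Ω := mΩ
  have hKmem : ∀ k ∈ K, k ≠ i ∧ k ≠ j := by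
    intro k hk
    simp only [hKdef, Set.mem_compl_iff, Set.mem_insert_iff, Set.mem_singleton_iff,
      not_or] at hk
    exact hk
  have hindep' := (iCondIndepFun_iff m' hm' (fun _ : Fin n => inferInstance) X hX P).mp hindep
  -- the key claim
  have key : ∀ t1 t2 : Set Ω,
      MeasurableSet[MeasurableSpace.comap (X i) inferInstance] t1 →
      MeasurableSet[MeasurableSpace.comap (X j) inferInstance] t2 →
      (P⟦t1 ∩ t2|m₀⟧) =ᵐ[P] (P⟦t1|m'⟧) * (P⟦t2|m'⟧) := by
    intro t1 t2 ht1 ht2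
    have ht1Ω : MeasurableSet[mΩ] t1 := (hX i).comap_le _ ht1
    have ht2Ω : MeasurableSet[mΩ] t2 := (hX j).comap_le _ ht2
    set g : Ω → ℝ := (P⟦t1|m'⟧) * (P⟦t2|m'⟧) with hgdef
    have hg_meas : StronglyMeasurable[m'] g :=
      stronglyMeasurable_condExp.mul stronglyMeasurable_condExp
    have hgbound : ∀ᵐ ω ∂P, ‖(P⟦t1|m'⟧) ω‖ ≤ 1 :=
      condexp_indicator_norm_le_one (mΩ := mΩ) hm' P ht1Ω
    have hg_int : Integrable g P :=
      Integrable.bdd_mul integrable_condExp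
        ((stronglyMeasurable_condExp.mono hm').aestronglyMeasurable) hgbound
    have hgbound' : ∀ᵐ ω ∂P, ‖g ω‖ ≤ 1 := by
      filter_upwards [hgbound, condexp_indicator_norm_le_one (mΩ := mΩ) hm' P ht2Ω] with ω h1 h2
      simp only [hgdef, Pi.mul_apply, norm_mul]
      calc ‖(P⟦t1|m'⟧) ω‖ * ‖(P⟦t2|m'⟧) ω‖ ≤ 1 * 1 :=
            mul_le_mul h1 h2 (norm_nonneg _) zero_le_one
        _ = 1 := by ring
    set ind : Ω → ℝ := (t1 ∩ t2).indicator (fun _ => (1:ℝ)) with hinddef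
    have hind_int : Integrable ind P := (integrable_const 1).indicator (ht1Ω.inter ht2Ω)
    -- basic identity on generating sets
    have basic : ∀ M : Set Ω, MeasurableSet[m'] M → ∀ t : Finset (Fin n), ↑t ⊆ K →
        ∀ f : Fin n → Set Ω,
        (∀ k ∈ t, MeasurableSet[MeasurableSpace.comap (X k) inferInstance] (f k)) →
        ∫ ω in M ∩ ⋂ k ∈ t, f k, g ω ∂P = ∫ ω in M ∩ ⋂ k ∈ t, f k, ind ω ∂P := by
      intro M hM t htK f hfm
      have hMΩ : MeasurableSet[mΩ] M := hm' _ hM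
      set C : Set Ω := ⋂ k ∈ t, f k with hCdef
      have hfmΩ : ∀ k ∈ t, MeasurableSet[mΩ] (f k) := fun k hk => (hX k).comap_le _ (hfm k hk)
      have hC : MeasurableSet[mΩ] C := t.measurableSet_biInter hfmΩ
      have h1C : Integrable (C.indicator (fun _ => (1:ℝ))) P := (integrable_const 1).indicator hC
      have hgC_int : Integrable (g * C.indicator (fun _ => (1:ℝ))) P :=
        Integrable.bdd_mul h1C (hg_meas.mono hm').aestronglyMeasurable hgbound'
      have hit : i ∉ t := fun h => (hKmem i (htK h)).1 rfl
      have hjt : j ∉ t := fun h => (hKmem j (htK h)).2 rfl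
      set g' : Fin n → Set Ω := fun k => if k = i then t1 else if k = j then t2 else f k
        with hg'def
      have hg'i : g' i = t1 := by simp [hg'def]
      have hg'j : g' j = t2 := by simp [hg'def, Ne.symm hij]
      have hg't : ∀ k ∈ t, g' k = f k := by
        intro k hk
        obtain ⟨hki, hkj⟩ := hKmem k (htK hk)
        simp [hg'def, hki, hkj]
      have hg'm : ∀ k ∈ insert i (insert j t),
          MeasurableSet[MeasurableSpace.comap (X k) inferInstance] (g' k) := by
        intro k hk
        rcases Finset.mem_insert.mp hk with rfl | hk
        · rw [hg'i]; exact ht1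
        rcases Finset.mem_insert.mp hk with rfl | hk
        · rw [hg'j]; exact ht2
        · rw [hg't k hk]; exact hfm k hk
      have H1 := hindep' (insert i (insert j t)) hg'm
      have H2 := hindep' t (g := f) hfm
      have hInterT : (⋂ k ∈ t, g' k) = C := Set.iInter₂_congr hg't
      have hInter : (⋂ l ∈ insert i (insert j t), g' l) = (t1 ∩ t2) ∩ C := by
        rw [Finset.set_biInter_insert, Finset.set_biInter_insert, hg'i, hg'j, hInterT,
          Set.inter_assoc]
      have hprod : (∏ l ∈ insert i (insert j t), (P⟦g' l|m'⟧))
          = g * ∏ k ∈ t, (P⟦f k|m'⟧) := by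
        rw [Finset.prod_insert (by simp [hit, hij]), Finset.prod_insert hjt, hg'i, hg'j,
          hgdef, mul_assoc]
        congr 1
        congr 1
        exact Finset.prod_congr rfl fun k hk => by rw [hg't k hk]
      have hre : ∀ {u v : Ω → ℝ}, u =ᵐ[P] v →
          ∫ ω in M, u ω ∂P = ∫ ω in M, v ω ∂P := fun h =>
        integral_congr_ae (ae_restrict_of_ae h)
      have hIndInter : Integrable
          ((⋂ l ∈ insert i (insert j t), g' l).indicator (fun _ => (1:ℝ))) P := by
        rw [hInter]; exact (integrable_const 1).indicator ((ht1Ω.inter ht2Ω).inter hC)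
      calc ∫ ω in M ∩ C, g ω ∂P
          = ∫ ω in M, C.indicator g ω ∂P := (setIntegral_indicator hC).symm
        _ = ∫ ω in M, (g * C.indicator (fun _ => (1:ℝ))) ω ∂P := by
            refine integral_congr_ae (Filter.Eventually.of_forall fun ω => ?_)
            by_cases h : ω ∈ C <;> simp [h]
        _ = ∫ ω in M, (P[g * C.indicator (fun _ => (1:ℝ))|m']) ω ∂P :=
            (setIntegral_condExp hm' hgC_int hM).symm
        _ = ∫ ω in M, (g * (P⟦C|m'⟧)) ω ∂P :=
            hre (condExp_mul_of_stronglyMeasurable_left hg_meas hgC_int h1C)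
        _ = ∫ ω in M, (g * ∏ k ∈ t, (P⟦f k|m'⟧)) ω ∂P :=
            hre (Filter.EventuallyEq.mul (Filter.EventuallyEq.refl _ g) H2)
        _ = ∫ ω in M, (∏ l ∈ insert i (insert j t), (P⟦g' l|m'⟧)) ω ∂P := by rw [hprod]
        _ = ∫ ω in M, (P⟦⋂ l ∈ insert i (insert j t), g' l|m'⟧) ω ∂P := hre H1.symm
        _ = ∫ ω in M, (⋂ l ∈ insert i (insert j t), g' l).indicator (fun _ => (1:ℝ)) ω ∂P :=
            setIntegral_condExp hm' hIndInter hM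
        _ = ∫ ω in M, ((t1 ∩ t2) ∩ C).indicator (fun _ => (1:ℝ)) ω ∂P := by rw [hInter]
        _ = ∫ ω in M ∩ ((t1 ∩ t2) ∩ C), (fun _ => (1:ℝ)) ω ∂P :=
            setIntegral_indicator ((ht1Ω.inter ht2Ω).inter hC)
        _ = ∫ ω in (M ∩ C) ∩ (t1 ∩ t2), (fun _ => (1:ℝ)) ω ∂P := by
            have : M ∩ ((t1 ∩ t2) ∩ C) = (M ∩ C) ∩ (t1 ∩ t2) := by
              ext ω; simp only [Set.mem_inter_iff]; tauto
            rw [this]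
        _ = ∫ ω in M ∩ C, ind ω ∂P := (setIntegral_indicator (ht1Ω.inter ht2Ω)).symm
    have htotal : ∫ ω, g ω ∂P = ∫ ω, ind ω ∂P := by
      have := basic Set.univ MeasurableSet.univ ∅ (by simp) (fun _ => Set.univ) (by simp)
      simpa using this
    -- extend to all m₀-measurable sets
    set F : Option (Fin n) → MeasurableSpace Ω :=
      fun o => o.elim m' (fun k => MeasurableSpace.comap (X k) inferInstance) with hFdef
    set S : Set (Option (Fin n)) := insert none (some '' K) with hSdef
    have h_eq : m₀ = MeasurableSpace.generateFrom
        (piiUnionInter (fun o => {s | MeasurableSet[F o] s}) S) := by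
      rw [generateFrom_piiUnionInter_measurableSet F S, hSdef]
      rw [iSup_insert, iSup_image]
      rfl
    have h_pi : IsPiSystem (piiUnionInter (fun o => {s | MeasurableSet[F o] s}) S) :=
      isPiSystem_piiUnionInter _ (fun o => @MeasurableSpace.isPiSystem_measurableSet Ω (F o)) S
    have hg_eq : ∀ D : Set Ω, MeasurableSet[m₀] D →
        ∫ ω in D, g ω ∂P = ∫ ω in D, ind ω ∂P := by
      intro D hD
      refine MeasurableSpace.induction_on_inter (m := m₀)
        (C := fun D _ => ∫ ω in D, g ω ∂P = ∫ ω in D, ind ω ∂P) h_eq h_pi ?_ ?_ ?_ ?_ D hD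
      · simp
      · rintro u ⟨t, htS, f, hf, rfl⟩
        set t' : Finset (Fin n) := t.preimage some ((Option.some_injective _).injOn) with ht'def
        set M : Set Ω := if none ∈ t then f none else Set.univ with hMdef
        have hM : MeasurableSet[m'] M := by
          rw [hMdef]
          split_ifs with h0
          · exact hf none h0
          · exact MeasurableSet.univ
        have ht'K : ↑t' ⊆ K := by
          intro k hk
          simp only [ht'def, Finset.coe_preimage, Set.mem_preimage] at hk
          have := htS hk
          rcases this with h | ⟨k', hk', hkk'⟩
          · exact absurd h (by simp)
          · rwa [Option.some_injective _ hkk'] at hk'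
        have hset : (⋂ x ∈ t, f x) = M ∩ ⋂ k ∈ t', f (some k) := by
          ext ω
          simp only [Set.mem_iInter, Set.mem_inter_iff, ht'def, Finset.mem_preimage]
          constructor
          · intro h
            refine ⟨?_, fun k hk => h _ hk⟩
            rw [hMdef]
            split_ifs with h0
            · exact h none h0
            · trivial
          · rintro ⟨hMω, h⟩ x hx
            match x with
            | none => rw [hMdef, if_pos hx] at hMω; exact hMω
            | some k => exact h k hx
        rw [hset]
        exact basic M hM t' ht'K (fun k => f (some k)) (fun k hk => by
          have : some k ∈ t := by
            simpa only [ht'def, Finset.mem_preimage] using hk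
          exact hf (some k) this)
      · intro u hu hCU
        have huΩ : MeasurableSet[mΩ] u := hm₀ _ hu
        have e1 := integral_add_compl huΩ hg_int
        have e2 := integral_add_compl huΩ hind_int
        have : ∫ ω in u, g ω ∂P + ∫ ω in uᶜ, g ω ∂P
            = ∫ ω in u, ind ω ∂P + ∫ ω in uᶜ, ind ω ∂P := by
          rw [e1, e2, htotal]
        linarith
      · intro f hdisj hfm hCf
        rw [integral_iUnion (fun k => hm₀ _ (hfm k)) hdisj hg_int.integrableOn,
          integral_iUnion (fun k => hm₀ _ (hfm k)) hdisj hind_int.integrableOn]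
        exact tsum_congr hCf
    have hgm₀ : AEStronglyMeasurable[m₀] g P :=
      StronglyMeasurable.aestronglyMeasurable (hg_meas.mono le_sup_left)
    exact (ae_eq_condExp_of_forall_setIntegral_eq hm₀ hind_int
      (fun s _ _ => hg_int.integrableOn) (fun s hs _ => hg_eq s hs) hgm₀).symm
  -- conclude
  rw [condIndepFun_iff _ _ _ _ (hX i) (hX j)]
  intro t1 t2 ht1 ht2
  have huniv_j : MeasurableSet[MeasurableSpace.comap (X j) inferInstance] (Set.univ : Set Ω) :=
    MeasurableSet.univ
  have huniv_i : MeasurableSet[MeasurableSpace.comap (X i) inferInstance] (Set.univ : Set Ω) :=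
    MeasurableSet.univ
  have k12 := key t1 t2 ht1 ht2
  have k1 := key t1 Set.univ ht1 huniv_j
  have k2 := key Set.univ t2 huniv_i ht2
  rw [Set.inter_univ] at k1
  rw [Set.univ_inter] at k2
  have hone : (P⟦(Set.univ : Set Ω)|m'⟧) = fun _ => (1:ℝ) := by
    rw [Set.indicator_univ, condExp_const hm']
  rw [hone] at k1 k2
  filter_upwards [k12, k1, k2] with ω h12 h1 h2
  simp only [Pi.mul_apply] at h12 h1 h2 ⊢
  rw [h12, h1, h2]
  ring
end

section
/- Let n ≥ 1 and let h : ℝⁿ → ℝⁿ be continuously differentiable such that at every point ẑ the Jacobian Dh(ẑ) is invertible and each of its rows has at most one nonzero entry (i.e., (Dh(ẑ))_{ki}·(Dh(ẑ))_{kj} = 0 for all k and all i ≠ j). Then there exist a permutation σ of {1,…,n} and continuously differentiable functions h_1,…,h_n : ℝ → ℝ, each with nowhere-vanishing derivative, such that h(ẑ)_k = h_k(ẑ_{σ(k)}) for all ẑ ∈ ℝⁿ and all k = 1,…,n. In particular, h is a permuted componentwise transformation with each component map injective. -/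
/-- Global step of Theorems 1–3: a C¹ map `h : ℝⁿ → ℝⁿ` whose Jacobian is everywhere invertible
with at most one nonzero entry in each row is a permuted componentwise transformation
`h(ẑ)_k = h_k(ẑ_{σ(k)})` with each `h_k : ℝ → ℝ` C¹ with nowhere-vanishing derivative
(in particular injective). -/
theorem stmt12 (n : ℕ) (hn : 1 ≤ n)
    (h : (Fin n → ℝ) → (Fin n → ℝ)) (hsmooth : ContDiff ℝ 1 h)
    (J : (Fin n → ℝ) → Matrix (Fin n) (Fin n) ℝ)
    (hJ : ∀ zh k i, J zh k i = fderiv ℝ h zh (Pi.single i 1) k)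
    (hJinv : ∀ zh, IsUnit (J zh))
    (hrow : ∀ (zh : Fin n → ℝ) (k i j : Fin n), i ≠ j → J zh k i * J zh k j = 0) :
    ∃ (σ : Equiv.Perm (Fin n)) (g : Fin n → ℝ → ℝ),
      (∀ k, ContDiff ℝ 1 (g k)) ∧
      (∀ k x, deriv (g k) x ≠ 0) ∧
      (∀ (zh : Fin n → ℝ) (k : Fin n), h zh k = g k (zh (σ k))) ∧
      (∀ k, Function.Injective (g k)) := by
  classical
  have hdiff : Differentiable ℝ h := hsmooth.differentiable one_ne_zero
  -- continuity of the entries of J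
  have hJcont : ∀ k i, Continuous fun z => J z k i := by
    intro k i
    have hc : Continuous (fderiv ℝ h) := hsmooth.continuous_fderiv one_ne_zero
    have h1 : Continuous fun z => fderiv ℝ h z (Pi.single i 1) :=
      hc.clm_apply continuous_const
    have h2 := (continuous_apply k).comp h1
    change Continuous (fun z => fderiv ℝ h z (Pi.single i 1) k) at h2
    convert h2 using 2 with z
    exact hJ z k i
  -- every row of J has a nonzero entry
  have hex : ∀ (z : Fin n → ℝ) (k : Fin n), ∃ i, J z k i ≠ 0 := by
    intro z k
    by_contra hc
    push_neg at hc
    obtain ⟨u, hu⟩ := hJinv z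
    have h1 : ((u : Matrix (Fin n) (Fin n) ℝ) * (↑u⁻¹ : Matrix (Fin n) (Fin n) ℝ)) k k
        = (1 : Matrix (Fin n) (Fin n) ℝ) k k := by
      rw [Units.mul_inv]
    rw [Matrix.mul_apply] at h1
    simp [hu, hc, Matrix.one_apply] at h1
  -- choose the nonzero column in each row at the origin
  set σ₀ : Fin n → Fin n := fun k => Classical.choose (hex 0 k) with hσ₀def
  have hσ₀ : ∀ k, J 0 k (σ₀ k) ≠ 0 := fun k => Classical.choose_spec (hex 0 k)
  -- the nonzero entry of row k is at column σ₀ k, at EVERY point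
  have key : ∀ (k : Fin n) (z : Fin n → ℝ), J z k (σ₀ k) ≠ 0 := by
    intro k
    set S : Set (Fin n → ℝ) := {z | J z k (σ₀ k) ≠ 0} with hS
    have hopen : IsOpen S := by
      have : S = (fun z => J z k (σ₀ k)) ⁻¹' {(0 : ℝ)}ᶜ := by
        ext z; simp [hS]
      rw [this]
      exact (isOpen_compl_singleton).preimage (hJcont k (σ₀ k))
    have hclosed : IsClosed S := by
      rw [← isOpen_compl_iff, isOpen_iff_mem_nhds]
      intro z hz
      simp only [hS, Set.mem_compl_iff, Set.mem_setOf_eq, not_not] at hz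
      obtain ⟨i, hi⟩ := hex z k
      have hik : i ≠ σ₀ k := by rintro rfl; exact hi hz
      have hev : ∀ᶠ w in nhds z, J w k i ≠ 0 :=
        (hJcont k i).continuousAt.eventually_ne hi
      refine Filter.mem_of_superset hev ?_
      intro w hw
      simp only [hS, Set.mem_compl_iff, Set.mem_setOf_eq, not_not]
      exact (mul_eq_zero.1 (hrow w k i (σ₀ k) hik)).resolve_left hw
    have hclop : IsClopen S := ⟨hclosed, hopen⟩
    have huniv : S = Set.univ := hclop.eq_univ ⟨0, hσ₀ k⟩
    intro z
    have : z ∈ S := huniv ▸ Set.mem_univ z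
    exact this
  have hzero : ∀ (z : Fin n → ℝ) (k i : Fin n), i ≠ σ₀ k → J z k i = 0 := by
    intro z k i hi
    exact (mul_eq_zero.1 (hrow z k i (σ₀ k) hi)).resolve_right (key k z)
  have hsing : ∀ (i : Fin n) (x : ℝ),
      (Pi.single i x : Fin n → ℝ) = x • (Pi.single i (1 : ℝ) : Fin n → ℝ) := by
    intro i x
    funext j
    rcases eq_or_ne j i with rfl | hj
    · simp
    · simp [Pi.single_eq_of_ne hj]
  -- σ₀ is surjective, hence bijective
  have hsurj : Function.Surjective σ₀ := by
    intro j
    by_contra hj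
    push_neg at hj
    have hcol : ∀ k, J 0 k j = 0 := fun k => hzero 0 k j (fun hh => hj k hh.symm)
    have hmv : (J 0).mulVec (Pi.single j 1) = 0 := by
      funext k
      simp only [Matrix.mulVec, dotProduct, Pi.zero_apply]
      rw [Finset.sum_eq_zero]
      intro i _
      by_cases hij : i = j
      · subst hij; rw [hcol k]; ring
      · simp [Pi.single_eq_of_ne hij]
    obtain ⟨u, hu⟩ := hJinv 0
    have h1 : Pi.single j (1 : ℝ) =
        ((↑u⁻¹ : Matrix (Fin n) (Fin n) ℝ) * (↑u : Matrix (Fin n) (Fin n) ℝ)).mulVec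
          (Pi.single j 1) := by
      rw [Units.inv_mul, Matrix.one_mulVec]
    rw [← Matrix.mulVec_mulVec, hu, hmv, Matrix.mulVec_zero] at h1
    have := congrFun h1 j
    simp at this
  have hbij : Function.Bijective σ₀ := Finite.surjective_iff_bijective.1 hsurj
  set σ : Equiv.Perm (Fin n) := Equiv.ofBijective σ₀ hbij with hσdef
  -- h z k depends only on z (σ₀ k)
  have hconst : ∀ (k : Fin n) (z w : Fin n → ℝ), z (σ₀ k) = w (σ₀ k) → h z k = h w k := by
    intro k z w hzw
    set ψ : ℝ → ℝ := fun t => h (z + t • (w - z)) k with hψdef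
    have hfd : ∀ p : Fin n → ℝ, fderiv ℝ h p (w - z) k = 0 := by
      intro p
      have hv : (w - z) = ∑ i, (w - z) i • (Pi.single i (1 : ℝ) : Fin n → ℝ) := by
        conv_lhs => rw [← Finset.univ_sum_single (w - z)]
        exact Finset.sum_congr rfl (fun i _ => hsing i ((w - z) i))
      rw [hv, map_sum]
      rw [Finset.sum_apply]
      rw [Finset.sum_eq_zero]
      intro i _
      rw [ContinuousLinearMap.map_smul]
      by_cases hi : i = σ₀ k
      · subst hi
        have h0 : (w - z) (σ₀ k) = 0 := by simp [hzw]
        rw [h0, zero_smul]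
        simp
      · have h0 : fderiv ℝ h p (Pi.single i 1) k = 0 := by rw [← hJ]; exact hzero p k i hi
        simp [h0]
    have hψ : ∀ t : ℝ, HasDerivAt ψ 0 t := by
      intro t
      have hp : HasDerivAt (fun t : ℝ => z + t • (w - z)) (w - z) t := by
        simpa using ((hasDerivAt_id t).smul_const (w - z)).const_add z
      have hf := (hdiff (z + t • (w - z))).hasFDerivAt
      have hcomp := hf.comp_hasDerivAt t hp
      have heval :=
        ((ContinuousLinearMap.proj k : ((Fin n → ℝ)) →L[ℝ] ℝ).hasFDerivAt).comp_hasDerivAt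
          t hcomp
      have : (ContinuousLinearMap.proj (R := ℝ) (φ := fun _ : Fin n => ℝ) k)
          (fderiv ℝ h (z + t • (w - z)) (w - z)) = 0 := hfd _
      rw [this] at heval
      exact heval
    have hdψ : Differentiable ℝ ψ := fun t => (hψ t).differentiableAt
    have hc := is_const_of_deriv_eq_zero hdψ (fun t => (hψ t).deriv) 0 1
    simpa [hψdef] using hc
  -- define the componentwise functions
  set g : Fin n → ℝ → ℝ := fun k x => h (Pi.single (σ₀ k) x) k with hgdef
  have hsingle : ∀ (k : Fin n) (x : ℝ),
      (Pi.single (σ₀ k) x : Fin n → ℝ) = x • (Pi.single (σ₀ k) (1 : ℝ) : Fin n → ℝ) :=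
    fun k x => hsing (σ₀ k) x
  -- C¹
  have hgsmooth : ∀ k, ContDiff ℝ 1 (g k) := by
    intro k
    have hinner : ContDiff ℝ 1 (fun x : ℝ => Pi.single (σ₀ k) x : ℝ → Fin n → ℝ) := by
      have : (fun x : ℝ => Pi.single (σ₀ k) x : ℝ → Fin n → ℝ)
          = fun x : ℝ => x • (Pi.single (σ₀ k) (1 : ℝ) : Fin n → ℝ) := funext (hsingle k)
      rw [this]
      exact contDiff_id.smul contDiff_const
    exact ((ContinuousLinearMap.proj (R := ℝ) (φ := fun _ : Fin n => ℝ) k).contDiff).comp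
      (hsmooth.comp hinner)
  -- derivative of g k
  have hgderiv : ∀ (k : Fin n) (x : ℝ),
      HasDerivAt (g k) (J (Pi.single (σ₀ k) x) k (σ₀ k)) x := by
    intro k x
    have hp : HasDerivAt (fun t : ℝ => Pi.single (σ₀ k) t : ℝ → Fin n → ℝ)
        (Pi.single (σ₀ k) (1 : ℝ)) x := by
      have h1 : HasDerivAt (fun t : ℝ => t • (Pi.single (σ₀ k) (1 : ℝ) : Fin n → ℝ))
          (Pi.single (σ₀ k) (1 : ℝ) : Fin n → ℝ) x := by
        simpa using (hasDerivAt_id x).smul_const (Pi.single (σ₀ k) (1 : ℝ) : Fin n → ℝ)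
      have : (fun t : ℝ => Pi.single (σ₀ k) t : ℝ → Fin n → ℝ)
          = fun t : ℝ => t • (Pi.single (σ₀ k) (1 : ℝ) : Fin n → ℝ) := funext (hsingle k)
      rw [this]
      exact h1
    have hf := (hdiff (Pi.single (σ₀ k) x)).hasFDerivAt
    have hcomp := hf.comp_hasDerivAt x hp
    have heval :=
      ((ContinuousLinearMap.proj k : ((Fin n → ℝ)) →L[ℝ] ℝ).hasFDerivAt).comp_hasDerivAt
        x hcomp
    have hval : (ContinuousLinearMap.proj (R := ℝ) (φ := fun _ : Fin n => ℝ) k)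
        (fderiv ℝ h (Pi.single (σ₀ k) x) (Pi.single (σ₀ k) (1 : ℝ)))
        = J (Pi.single (σ₀ k) x) k (σ₀ k) := by
      simp only [ContinuousLinearMap.proj_apply]
      rw [hJ]
    rw [hval] at heval
    exact heval
  have hgd : ∀ (k : Fin n) (x : ℝ), deriv (g k) x ≠ 0 := by
    intro k x
    rw [(hgderiv k x).deriv]
    exact key k _
  -- the factorization
  have hfact : ∀ (zh : Fin n → ℝ) (k : Fin n), h zh k = g k (zh (σ k)) := by
    intro zh k
    have hσk : σ k = σ₀ k := rfl
    rw [hσk]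
    exact hconst k zh (Pi.single (σ₀ k) (zh (σ₀ k))) (by simp)
  -- injectivity from nonvanishing derivative via Rolle
  have hginj : ∀ k, Function.Injective (g k) := by
    intro k a b hab
    by_contra hne
    rcases lt_trichotomy a b with hlt | heq | hlt
    · obtain ⟨c, _, hc⟩ := exists_deriv_eq_zero hlt
        ((hgsmooth k).continuous.continuousOn) hab
      exact hgd k c hc
    · exact hne heq
    · obtain ⟨c, _, hc⟩ := exists_deriv_eq_zero hlt
        ((hgsmooth k).continuous.continuousOn) hab.symm
      exact hgd k c hc
  exact ⟨σ, g, hgsmooth, hgd, hfact, hginj⟩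
end
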